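/- arXiv:0801.3512 — 5 statements merged into one kernel-verified Lean document; each statement's English description precedes it below -/
import Mathlib

section
/- Let A = {L_0, L_1, …, L_n} be a line arrangement in ℙ²(ℂ) of type C_k with k ≤ 2, i.e. such that there exist at most two lines among L_0, …, L_n whose union contains every point of multiplicity at least 3 in A. Then every rank one local system on the complement M is admissible: for any λ_0, …, λ_n ∈ ℂ* with λ_0 ⋯ λ_n = 1 there exist residues a_0, …, a_n ∈ ℂ with exp(2πi a_j) = λ_j for all j, ∑_{j=0}^n a_j = 0, a_j ∉ ℤ_{>0} for all j, and a(p) = ∑_{j : p ∈ L_j} a_j ∉ ℤ_{>0} for every point p of multiplicity at least 3 in A. -/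
noncomputable section

open Finset Complex

attribute [local instance] Classical.propDecidable

/-- The complex projective plane ℙ²(ℂ). -/
abbrev PP : Type := Projectivization ℂ (Fin 3 → ℂ)

/-- A projective line in ℙ²(ℂ), given as a nonzero linear form up to scalar. -/
abbrev PLine : Type := Projectivization ℂ (Module.Dual ℂ (Fin 3 → ℂ))

/-- Membership of a point on a projective line. -/
def memL (p : PP) (L : PLine) : Prop := L.rep p.rep = 0

/-- A point has multiplicity at least 3 in the arrangement `L`. -/
def multGe3 {N : ℕ} (L : Fin N → PLine) (p : PP) : Prop :=
  3 ≤ (Finset.univ.filter fun j => memL p (L j)).card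

/-- The strictly positive integers, inside ℂ. -/
def PosIntC : Set ℂ := {z | ∃ m : ℤ, 0 < m ∧ z = (m : ℂ)}

/-- The strictly positive integers, inside ℝ. -/
def PosIntR : Set ℝ := {x | ∃ m : ℤ, 0 < m ∧ x = (m : ℝ)}

/-- `a(p)`: the sum of residues over lines through `p`. -/
def aSum {N : ℕ} (L : Fin N → PLine) (a : Fin N → ℂ) (p : PP) : ℂ :=
  ∑ j ∈ Finset.univ.filter (fun j => memL p (L j)), a j

/-- Admissibility of the rank one local system with monodromies `lam`. -/
def Admissible {N : ℕ} (L : Fin N → PLine) (lam : Fin N → ℂˣ) : Prop :=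
  ∃ a : Fin N → ℂ,
    (∀ j, Complex.exp (2 * (Real.pi : ℂ) * Complex.I * a j) = (lam j : ℂ)) ∧
    (∑ j, a j = 0) ∧
    (∀ j, a j ∉ PosIntC) ∧
    (∀ p : PP, multGe3 L p → aSum L a p ∉ PosIntC)

/- ### Auxiliary lemmas -/

lemma not_posIntC_of_re_lt_one {z : ℂ} (h : z.re < 1) : z ∉ PosIntC := by
  rintro ⟨m, hm, rfl⟩
  rw [Complex.intCast_re] at h
  have : (1:ℝ) ≤ (m:ℝ) := by exact_mod_cast hm
  linarith

lemma not_posIntC_of_nonpos_int {m : ℤ} (hm : m ≤ 0) : ((m:ℂ)) ∉ PosIntC := by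
  rintro ⟨k, hk, hz⟩
  have : m = k := by exact_mod_cast hz
  omega

def residAux (z : ℂˣ) : ℂ := Complex.log z / (2 * (Real.pi : ℂ) * Complex.I)

def resid (z : ℂˣ) : ℂ := residAux z - (⌊(residAux z).re⌋ : ℤ)

lemma two_pi_I_ne : (2 * (Real.pi : ℂ) * Complex.I) ≠ 0 := by
  simp [Real.pi_ne_zero, Complex.I_ne_zero]

lemma resid_re_eq (z : ℂˣ) : (resid z).re = Int.fract (residAux z).re := by
  rw [resid, Complex.sub_re, Complex.intCast_re, Int.fract]

lemma resid_re_nonneg (z : ℂˣ) : 0 ≤ (resid z).re := by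
  rw [resid_re_eq]; exact Int.fract_nonneg _

lemma resid_re_lt_one (z : ℂˣ) : (resid z).re < 1 := by
  rw [resid_re_eq]; exact Int.fract_lt_one _

lemma exp_two_pi_I_int (m : ℤ) : Complex.exp (2 * (Real.pi : ℂ) * Complex.I * (m : ℂ)) = 1 := by
  rw [show 2 * (Real.pi : ℂ) * Complex.I * (m : ℂ)
      = (m : ℂ) * (2 * (Real.pi : ℂ) * Complex.I) by ring]
  exact Complex.exp_int_mul_two_pi_mul_I m

lemma exp_resid (z : ℂˣ) : Complex.exp (2 * (Real.pi : ℂ) * Complex.I * resid z) = (z : ℂ) := by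
  rw [resid, mul_sub, Complex.exp_sub, exp_two_pi_I_int, div_one]
  rw [show 2 * (Real.pi : ℂ) * Complex.I * residAux z = Complex.log z by
    rw [residAux, mul_comm]
    exact div_mul_cancel₀ _ two_pi_I_ne]
  exact Complex.exp_log z.ne_zero

lemma line_unique {p q : PP} (hpq : p ≠ q) {M₁ M₂ : PLine}
    (h1p : memL p M₁) (h1q : memL q M₁) (h2p : memL p M₂) (h2q : memL q M₂) :
    M₁ = M₂ := by
  have h1p' : M₁.rep p.rep = 0 := h1p
  have h1q' : M₁.rep q.rep = 0 := h1q
  have h2p' : M₂.rep p.rep = 0 := h2p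
  have h2q' : M₂.rep q.rep = 0 := h2q
  have hgne : M₂.rep ≠ 0 := M₂.rep_nonzero
  have hli2 : LinearIndependent ℂ ![p.rep, q.rep] := by
    have h := (Projectivization.independent_pair_iff_ne p q).mpr hpq
    rw [Projectivization.independent_iff] at h
    have he : Projectivization.rep ∘ ![p, q] = ![p.rep, q.rep] := by
      funext i; fin_cases i <;> rfl
    rwa [he] at h
  have hpair := LinearIndependent.pair_iff.mp hli2
  obtain ⟨w, hw⟩ : ∃ w, M₁.rep w ≠ 0 := by
    by_contra h
    push_neg at h
    exact M₁.rep_nonzero (LinearMap.ext h)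
  have hindep : LinearIndependent ℂ ![p.rep, q.rep, w] := by
    rw [Fintype.linearIndependent_iff]
    intro c hc
    rw [Fin.sum_univ_three] at hc
    simp only [Matrix.cons_val_zero, Matrix.cons_val_one, Matrix.head_cons,
      Matrix.cons_val_two, Matrix.tail_cons] at hc
    have hc2 : c 2 = 0 := by
      have h := congrArg M₁.rep hc
      simp only [map_add, map_smul, map_zero, smul_eq_mul, h1p', h1q'] at h
      rcases mul_eq_zero.mp (show c 2 * M₁.rep w = 0 by linear_combination h) with h' | h'
      · exact h'
      · exact absurd h' hw
    rw [hc2, zero_smul, add_zero] at hc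
    obtain ⟨h0, h1⟩ := hpair (c 0) (c 1) hc
    intro i
    fin_cases i <;> assumption
  have hcard : Fintype.card (Fin 3) = Module.finrank ℂ (Fin 3 → ℂ) := by simp
  let B := basisOfLinearIndependentOfCardEqFinrank hindep hcard
  have hB : ∀ i, B i = ![p.rep, q.rep, w] i := fun i => by
    simp [B, coe_basisOfLinearIndependentOfCardEqFinrank]
  set cc : ℂ := M₂.rep w / M₁.rep w with hcc
  have hkey : M₂.rep = cc • M₁.rep := by
    apply B.ext
    intro i
    rw [hB]
    fin_cases i <;>
      simp only [Matrix.cons_val_zero, Matrix.cons_val_one, Matrix.head_cons,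
        Matrix.cons_val_two, Matrix.tail_cons, LinearMap.smul_apply, smul_eq_mul, Fin.mk_one,
        Fin.mk_zero]
    · rw [h2p', h1p']; ring
    · rw [h2q', h1q']; ring
    · show M₂.rep w = cc * M₁.rep w
      rw [hcc, div_mul_cancel₀ _ hw]
  have hcne : cc ≠ 0 := by
    intro h
    rw [h, zero_smul] at hkey
    exact hgne hkey
  have hmk : Projectivization.mk ℂ M₁.rep M₁.rep_nonzero
      = Projectivization.mk ℂ M₂.rep M₂.rep_nonzero := by
    rw [Projectivization.mk_eq_mk_iff']
    refine ⟨cc⁻¹, ?_⟩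
    rw [hkey, smul_smul, inv_mul_cancel₀ hcne, one_smul]
  exact ((Projectivization.mk_rep M₁).symm.trans hmk).trans (Projectivization.mk_rep M₂)

lemma admissible_aux {n : ℕ} (L : Fin (n + 1) → PLine)
    (hdist : Function.Injective L)
    (i₁ i₂ : Fin (n + 1)) (hne : i₁ ≠ i₂)
    (hcov : ∀ p : PP, multGe3 L p → memL p (L i₁) ∨ memL p (L i₂))
    (lam : Fin (n + 1) → ℂˣ) (hlam : ∏ j, lam j = 1) :
    Admissible L lam := by
  classical
  set b : Fin (n+1) → ℂ := fun j => resid (lam j) with hbdef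
  have hbre0 : ∀ j, 0 ≤ (b j).re := fun j => resid_re_nonneg _
  have hbre1 : ∀ j, (b j).re < 1 := fun j => resid_re_lt_one _
  have hbexp : ∀ j, Complex.exp (2 * (Real.pi:ℂ) * Complex.I * b j) = ((lam j : ℂˣ) : ℂ) :=
    fun j => exp_resid _
  set E : Finset (Fin (n+1)) := univ \ {i₁, i₂} with hEdef
  have hE12 : ∀ j, j ∈ E ↔ (j ≠ i₁ ∧ j ≠ i₂) := by
    intro j; simp [hEdef, not_or]
  have hsplit : ∀ c : Fin (n+1) → ℂ, ∑ j, c j = c i₁ + c i₂ + ∑ j ∈ E, c j := by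
    intro c
    have h1 : E = (univ.erase i₂).erase i₁ := by
      ext j
      simp only [Finset.mem_erase, Finset.mem_univ, and_true, hE12 j]
    rw [h1, ← Finset.add_sum_erase _ c (mem_univ i₂),
      ← Finset.add_sum_erase _ c (show i₁ ∈ univ.erase i₂ by simp [hne])]
    ring
  obtain ⟨K, hK⟩ : ∃ K : ℤ, (K : ℂ) = ∑ j, b j := by
    have h1 : Complex.exp (2 * (Real.pi:ℂ) * Complex.I * ∑ j, b j) = 1 := by
      rw [Finset.mul_sum, Complex.exp_sum, Finset.prod_congr rfl fun j _ => hbexp j]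
      have : ∏ j, ((lam j : ℂˣ) : ℂ) = ((∏ j, lam j : ℂˣ) : ℂ) :=
        (map_prod (Units.coeHom ℂ) lam univ).symm
      rw [this, hlam, Units.val_one]
    rw [Complex.exp_eq_one_iff] at h1
    obtain ⟨k, hk⟩ := h1
    refine ⟨k, (mul_left_cancel₀ two_pi_I_ne ?_).symm⟩
    rw [hk]; ring
  set α : ℂ := b i₁ with hαdef
  set S' : ℂ := ∑ j ∈ E, b j with hS'def
  have hKsum : (K:ℂ) = α + b i₂ + S' := by rw [hK, hsplit b]
  set β : ℂ := b i₂ - K with hβdef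
  have hβ : β = -(α + S') := by rw [hβdef, hKsum]; ring
  have hS'subre : ∀ G, G ⊆ E → (∑ j ∈ G, b j).re ≤ S'.re := by
    intro G hG
    rw [hS'def, Complex.re_sum, Complex.re_sum]
    exact Finset.sum_le_sum_of_subset_of_nonneg hG fun j _ _ => hbre0 j
  set Fp : PP → Finset (Fin (n+1)) := fun p => univ.filter (fun j => memL p (L j)) with hFpdef
  set P : Finset (Fin (n+1)) → Prop := fun F =>
    (∃ p : PP, multGe3 L p ∧ memL p (L i₁) ∧ ¬ memL p (L i₂) ∧ F = Fp p ∩ E) ∧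
    (∃ m : ℤ, α + ∑ j ∈ F, b j = (m:ℂ)) with hPdef
  set T : Finset ℤ :=
    insert ⌊α.re⌋ ((E.powerset.filter P).image (fun F => ⌈(α + ∑ j ∈ F, b j).re⌉)) with hTdef
  have hTne : T.Nonempty := Finset.insert_nonempty _ _
  set t : ℤ := T.max' hTne with htdef
  have hoverlap : ∀ p q : PP, p ≠ q → (Fp p ∩ Fp q).card ≤ 1 := by
    intro p q hpq
    rw [Finset.card_le_one]
    intro j hj k hk
    simp only [hFpdef, Finset.mem_inter, Finset.mem_filter, Finset.mem_univ, true_and] at hj hk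
    exact hdist (line_unique hpq hj.1 hj.2 hk.1 hk.2)
  -- the key upper-bound estimate for t
  have hub : ∀ G : Finset (Fin (n+1)), G ⊆ E →
      (∀ F ∈ E.powerset.filter P, (F ∩ G).card ≤ 1) →
      ∀ M : ℤ, (M:ℂ) = α + S' - ∑ j ∈ G, b j → t ≤ M := by
    intro G hG hover M hM
    apply Finset.max'_le
    intro m hm
    rw [hTdef, Finset.mem_insert] at hm
    have hMre : (M:ℝ) = α.re + S'.re - (∑ j ∈ G, b j).re := by
      have h := congrArg Complex.re hM
      simpa using h
    rcases hm with rfl | hm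
    · have h1 : (⌊α.re⌋:ℝ) ≤ (M:ℝ) := by
        have h2 := Int.floor_le α.re
        have h3 := hS'subre G hG
        linarith
      exact_mod_cast h1
    · obtain ⟨F, hF, rfl⟩ := Finset.mem_image.mp hm
      have hPF : P F := (Finset.mem_filter.mp hF).2
      have hFE : F ⊆ E := Finset.mem_powerset.mp (Finset.mem_filter.mp hF).1
      obtain ⟨m₀, hm₀⟩ := hPF.2
      have hceil : ⌈(α + ∑ j ∈ F, b j).re⌉ = m₀ := by rw [hm₀]; simp
      rw [hceil]
      have hsum : (M:ℂ) - (m₀:ℂ) = ∑ j ∈ E \ (F ∪ G), b j - ∑ j ∈ F ∩ G, b j := by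
        have h1 : ∑ j ∈ F ∪ G, b j + ∑ j ∈ F ∩ G, b j = ∑ j ∈ F, b j + ∑ j ∈ G, b j :=
          Finset.sum_union_inter
        have h2 : ∑ j ∈ E \ (F ∪ G), b j + ∑ j ∈ F ∪ G, b j = S' :=
          Finset.sum_sdiff (Finset.union_subset hFE hG)
        rw [hM, ← hm₀]
        linear_combination h1 - h2
      have hre1 : (0:ℝ) ≤ (∑ j ∈ E \ (F ∪ G), b j).re := by
        rw [Complex.re_sum]; exact Finset.sum_nonneg fun j _ => hbre0 j
      have hre2 : (∑ j ∈ F ∩ G, b j).re < 1 := by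
        have hcard := hover F hF
        rcases Finset.eq_empty_or_nonempty (F ∩ G) with he | hne'
        · rw [he]; simp
        · have h1 : (F ∩ G).card = 1 := le_antisymm hcard (Finset.card_pos.mpr hne')
          obtain ⟨j, hj⟩ := Finset.card_eq_one.mp h1
          rw [hj, Finset.sum_singleton]; exact hbre1 j
      have h3 : (-1:ℝ) < ((M:ℂ) - (m₀:ℂ)).re := by
        rw [hsum, Complex.sub_re]; linarith
      have h4 : (-1:ℤ) < M - m₀ := by
        have h5 : ((M:ℂ) - (m₀:ℂ)).re = ((M - m₀ : ℤ):ℝ) := by push_cast; simp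
        rw [h5] at h3
        exact_mod_cast h3
      omega
  -- the residues
  set a : Fin (n+1) → ℂ := fun j => if j = i₁ then α - t else if j = i₂ then β + t else b j
    with hadef
  have hai₁ : a i₁ = α - t := by simp [hadef]
  have hai₂ : a i₂ = β + t := by simp [hadef, Ne.symm hne]
  have haE : ∀ j ∈ E, a j = b j := by
    intro j hj
    rw [hE12] at hj
    simp [hadef, hj.1, hj.2]
  -- sum decomposition over an arbitrary finset
  have hFsplit : ∀ (F : Finset (Fin (n+1))) (c : Fin (n+1) → ℂ),
      ∑ j ∈ F, c j = ∑ j ∈ F ∩ {i₁, i₂}, c j + ∑ j ∈ F ∩ E, c j := by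
    intro F c
    have h1 : F ∩ E = F \ (F ∩ {i₁, i₂}) := by
      ext j
      simp only [Finset.mem_inter, hE12 j, Finset.mem_sdiff, Finset.mem_insert,
        Finset.mem_singleton]
      constructor
      · rintro ⟨hjF, hj1, hj2⟩
        refine ⟨hjF, ?_⟩
        rintro ⟨-, rfl | rfl⟩
        · exact hj1 rfl
        · exact hj2 rfl
      · rintro ⟨hjF, hnot⟩
        exact ⟨hjF, fun h => hnot ⟨hjF, Or.inl h⟩, fun h => hnot ⟨hjF, Or.inr h⟩⟩
    rw [h1, ← Finset.sum_sdiff (Finset.inter_subset_left (s₂ := {i₁, i₂}))]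
    ring
  refine ⟨a, ?_, ?_, ?_, ?_⟩
  · -- exponentials
    intro j
    by_cases h1 : j = i₁
    · subst h1
      rw [hai₁, mul_sub, Complex.exp_sub, exp_two_pi_I_int, div_one]
      exact hbexp j
    by_cases h2 : j = i₂
    · subst h2
      rw [hai₂, show β + (t:ℂ) = b j + ((t - K : ℤ):ℂ) by rw [hβdef]; push_cast; ring,
        mul_add, Complex.exp_add, exp_two_pi_I_int, mul_one]
      exact hbexp j
    · rw [show a j = b j from by simp [hadef, h1, h2]]
      exact hbexp j
  · -- total sum is zero
    rw [hsplit a, hai₁, hai₂, Finset.sum_congr rfl haE, ← hS'def, hβ]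
    ring
  · -- individual residues are not positive integers
    intro j
    by_cases h1 : j = i₁
    · subst h1
      rw [hai₁]
      by_cases hint : ∃ m : ℤ, α = (m:ℂ)
      · obtain ⟨m₁, hm₁⟩ := hint
        have hfl : ⌊α.re⌋ = m₁ := by rw [hm₁]; simp
        have hle : m₁ ≤ t := by
          rw [htdef, ← hfl]
          exact Finset.le_max' T _ (by rw [hTdef]; exact Finset.mem_insert_self _ _)
        rw [show α - (t:ℂ) = ((m₁ - t : ℤ):ℂ) by rw [hm₁]; push_cast; ring]
        exact not_posIntC_of_nonpos_int (by omega)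
      · rintro ⟨k, hk0, hkeq⟩
        exact hint ⟨k + t, by push_cast; linear_combination hkeq⟩
    by_cases h2 : j = i₂
    · subst h2
      rw [hai₂]
      by_cases hint : ∃ M : ℤ, (M:ℂ) = α + S'
      · obtain ⟨M, hM⟩ := hint
        have hle : t ≤ M := by
          apply hub ∅ (Finset.empty_subset _) (fun F _ => by simp) M
          rw [Finset.sum_empty, sub_zero]; exact hM
        rw [show β + (t:ℂ) = ((t - M : ℤ):ℂ) by push_cast; rw [hβ]; linear_combination hM]
        exact not_posIntC_of_nonpos_int (by omega)
      · rintro ⟨k, hk0, hkeq⟩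
        refine hint ⟨t - k, ?_⟩
        rw [hβ] at hkeq
        push_cast
        linear_combination hkeq
    · rw [show a j = b j from by simp [hadef, h1, h2]]
      exact not_posIntC_of_re_lt_one (hbre1 j)
  · -- points of multiplicity at least 3
    intro p hp3
    have hFpsum : aSum L a p = ∑ j ∈ Fp p, a j := rfl
    have haFE : ∑ j ∈ Fp p ∩ E, a j = ∑ j ∈ Fp p ∩ E, b j :=
      Finset.sum_congr rfl fun j hj => haE j (Finset.mem_inter.mp hj).2
    have hmem : ∀ j, j ∈ Fp p ↔ memL p (L j) := by
      intro j; simp [hFpdef]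
    by_cases hp1 : memL p (L i₁) <;> by_cases hp2 : memL p (L i₂)
    · -- p on both lines
      have hpair : Fp p ∩ {i₁, i₂} = {i₁, i₂} := by
        ext j
        simp only [Finset.mem_inter, Finset.mem_insert, Finset.mem_singleton, and_iff_right_iff_imp]
        rintro (rfl | rfl) <;> [exact (hmem j).mpr hp1; exact (hmem j).mpr hp2]
      have hz : aSum L a p = ∑ j ∈ Fp p ∩ E, b j - S' := by
        rw [hFpsum, hFsplit (Fp p) a, hpair, Finset.sum_pair hne, hai₁, hai₂, haFE, hβ]
        ring
      apply not_posIntC_of_re_lt_one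
      rw [hz, Complex.sub_re]
      have := hS'subre (Fp p ∩ E) (Finset.inter_subset_right)
      linarith
    · -- p on L i₁ only
      have hpair : Fp p ∩ {i₁, i₂} = {i₁} := by
        ext j
        simp only [Finset.mem_inter, Finset.mem_insert, Finset.mem_singleton, hmem j]
        constructor
        · rintro ⟨hj, rfl | rfl⟩
          · rfl
          · exact absurd hj hp2
        · rintro rfl; exact ⟨hp1, Or.inl rfl⟩
      have hz : aSum L a p = α - t + ∑ j ∈ Fp p ∩ E, b j := by
        rw [hFpsum, hFsplit (Fp p) a, hpair, Finset.sum_singleton, hai₁, haFE]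
      by_cases hint : ∃ m₀ : ℤ, α + ∑ j ∈ Fp p ∩ E, b j = (m₀:ℂ)
      · obtain ⟨m₀, hm₀⟩ := hint
        have hmemT : m₀ ∈ T := by
          rw [hTdef]
          apply Finset.mem_insert_of_mem
          apply Finset.mem_image.mpr
          refine ⟨Fp p ∩ E, ?_, by rw [hm₀]; simp⟩
          rw [Finset.mem_filter, Finset.mem_powerset]
          exact ⟨Finset.inter_subset_right, ⟨p, hp3, hp1, hp2, rfl⟩, ⟨m₀, hm₀⟩⟩
        have hle : m₀ ≤ t := Finset.le_max' T _ hmemT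
        rw [show aSum L a p = ((m₀ - t : ℤ):ℂ) by rw [hz]; push_cast; linear_combination hm₀]
        exact not_posIntC_of_nonpos_int (by omega)
      · rintro ⟨k, hk0, hkeq⟩
        rw [hz] at hkeq
        exact hint ⟨k + t, by push_cast; linear_combination hkeq⟩
    · -- p on L i₂ only
      have hpair : Fp p ∩ {i₁, i₂} = {i₂} := by
        ext j
        simp only [Finset.mem_inter, Finset.mem_insert, Finset.mem_singleton, hmem j]
        constructor
        · rintro ⟨hj, rfl | rfl⟩
          · exact absurd hj hp1
          · rfl
        · rintro rfl; exact ⟨hp2, Or.inr rfl⟩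
      have hz : aSum L a p = β + t + ∑ j ∈ Fp p ∩ E, b j := by
        rw [hFpsum, hFsplit (Fp p) a, hpair, Finset.sum_singleton, hai₂, haFE]
      by_cases hint : ∃ M : ℤ, (M:ℂ) = α + S' - ∑ j ∈ Fp p ∩ E, b j
      · obtain ⟨M, hM⟩ := hint
        have hle : t ≤ M := by
          apply hub (Fp p ∩ E) Finset.inter_subset_right _ M hM
          intro F hF
          have hPF : P F := (Finset.mem_filter.mp hF).2
          obtain ⟨q, _, hq1, hq2, hFq⟩ := hPF.1
          have hqp : q ≠ p := fun h => hq2 (h ▸ hp2)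
          calc (F ∩ (Fp p ∩ E)).card ≤ (Fp q ∩ Fp p).card := by
                apply Finset.card_le_card
                intro j hj
                rw [Finset.mem_inter] at hj ⊢
                exact ⟨(Finset.mem_inter.mp (hFq ▸ hj.1)).1, (Finset.mem_inter.mp hj.2).1⟩
            _ ≤ 1 := hoverlap q p hqp
        rw [show aSum L a p = ((t - M : ℤ):ℂ) by
          rw [hz, hβ]; push_cast; linear_combination hM]
        exact not_posIntC_of_nonpos_int (by omega)
      · rintro ⟨k, hk0, hkeq⟩
        rw [hz, hβ] at hkeq
        exact hint ⟨t - k, by push_cast; linear_combination hkeq⟩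
    · exact absurd (hcov p hp3) (by simp [hp1, hp2])

/-- If `A = {L 0, …, L n}` is a line arrangement in `ℙ²(ℂ)` of type `C_k` with
`k ≤ 2` (i.e. there are at most two lines among them whose union contains every point of
multiplicity at least 3), then every rank one local system on the complement is admissible. -/
theorem admissible_of_classC2 {n : ℕ} (L : Fin (n + 1) → PLine)
    (hdist : Function.Injective L)
    (i₁ i₂ : Fin (n + 1))
    (hcov : ∀ p : PP, multGe3 L p → memL p (L i₁) ∨ memL p (L i₂))
    (lam : Fin (n + 1) → ℂˣ) (hlam : ∏ j, lam j = 1) :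
    Admissible L lam := by
  by_cases hne : i₁ = i₂
  · by_cases hn : n = 0
    · subst hn
      refine ⟨fun _ => 0, ?_, by simp, ?_, ?_⟩
      · intro j
        have hj0 : j = 0 := Fin.ext (by omega)
        have h0 : lam 0 = 1 := by rwa [Fin.prod_univ_one] at hlam
        rw [mul_zero, Complex.exp_zero, hj0, h0, Units.val_one]
      · rintro j ⟨m, hm, h⟩
        change (0:ℂ) = (m:ℂ) at h
        have : m = 0 := by exact_mod_cast h.symm
        omega
      · intro p hp
        exfalso
        have h1 : (univ.filter fun j => memL p (L j)).card ≤ 1 :=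
          le_trans (Finset.card_filter_le _ _) (by simp)
        have h2 : 3 ≤ (univ.filter fun j => memL p (L j)).card := hp
        omega
    · obtain ⟨i₂', hi₂'⟩ := Fintype.exists_ne_of_one_lt_card
        (by simp only [Fintype.card_fin]; omega) i₁
      refine admissible_aux L hdist i₁ i₂' (Ne.symm hi₂') ?_ lam hlam
      intro p hp
      rcases hcov p hp with h | h
      · exact Or.inl h
      · exact Or.inl (by rw [hne]; exact h)
  · exact admissible_aux L hdist i₁ i₂ hne hcov lam hlam
end
end

section
/- Let A = {L_0, L_1, …, L_n} be a line arrangement in ℙ²(ℂ) such that every point of multiplicity at least 3 in A lies on the union L_0 ∪ L_1 of two of its lines (type C_k with k ≤ 2). Then every rank one local system on the complement M is admissible. -/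
noncomputable section

open Finset Complex

attribute [local instance] Classical.propDecidable

/-- Two distinct projective lines cannot both contain two distinct points. -/
lemma two_lines_one_point {L L' : PLine} (hLL : L ≠ L') {p q : PP} (hpq : p ≠ q)
    (h1 : memL p L) (h2 : memL p L') (h3 : memL q L) (h4 : memL q L') : False := by
  set φ := L.rep with hφ
  set ψ := L'.rep with hψ
  set v := p.rep with hv
  set w := q.rep with hw
  have hφ0 : φ ≠ 0 := L.rep_nonzero
  have hψ0 : ψ ≠ 0 := L'.rep_nonzero
  have hv0 : v ≠ 0 := p.rep_nonzero
  have hw0 : w ≠ 0 := q.rep_nonzero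
  -- v, w linearly independent
  have hli : LinearIndependent ℂ ![v, w] := by
    rw [linearIndependent_fin2]
    refine ⟨by simpa using hw0, fun a ha => ?_⟩
    simp only [Matrix.cons_val_one, Matrix.head_cons, Matrix.cons_val_zero] at ha
    have ha0 : a ≠ 0 := by rintro rfl; simp at ha; exact hv0 ha.symm
    apply hpq
    have : Projectivization.mk ℂ v hv0 = Projectivization.mk ℂ w hw0 := by
      rw [Projectivization.mk_eq_mk_iff]
      exact ⟨Units.mk0 a ha0, ha⟩
    simpa [hv, hw, Projectivization.mk_rep] using this
  -- span {v, w} ≤ ker φ and = ker φ by dimension count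
  have hspan_le : Submodule.span ℂ (Set.range ![v, w]) ≤ LinearMap.ker φ := by
    rw [Submodule.span_le]
    rintro x ⟨i, rfl⟩
    fin_cases i <;> simp [LinearMap.mem_ker] <;> [exact h1; exact h3]
  have hrange : LinearMap.range φ = ⊤ := by
    rw [LinearMap.range_eq_top]
    obtain ⟨u, hu⟩ : ∃ u, φ u ≠ 0 := by
      by_contra h
      push_neg at h
      exact hφ0 (LinearMap.ext fun u => h u)
    intro c
    exact ⟨(c / φ u) • u, by simp [div_mul_cancel₀, hu]⟩
  have hker : Module.finrank ℂ (LinearMap.ker φ) = 2 := by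
    have := LinearMap.finrank_range_add_finrank_ker φ
    rw [hrange] at this
    simp only [finrank_top] at this
    have h3 : Module.finrank ℂ (Fin 3 → ℂ) = 3 := by simp
    have h1' : Module.finrank ℂ ℂ = 1 := Module.finrank_self ℂ
    omega
  have hspan_rank : Module.finrank ℂ (Submodule.span ℂ (Set.range ![v, w])) = 2 := by
    rw [finrank_span_eq_card hli]; simp
  have hspan_eq : Submodule.span ℂ (Set.range ![v, w]) = LinearMap.ker φ :=
    Submodule.eq_of_le_of_finrank_le hspan_le (by rw [hker, hspan_rank])
  -- ψ vanishes on ker φ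
  have hψker : ∀ z ∈ LinearMap.ker φ, ψ z = 0 := by
    intro z hz
    rw [← hspan_eq] at hz
    have : Submodule.span ℂ (Set.range ![v, w]) ≤ LinearMap.ker ψ := by
      rw [Submodule.span_le]
      rintro x ⟨i, rfl⟩
      fin_cases i <;> simp [LinearMap.mem_ker] <;> [exact h2; exact h4]
    exact this hz
  -- therefore ψ = c • φ
  obtain ⟨u, hu⟩ : ∃ u, φ u ≠ 0 := by
    by_contra h
    push_neg at h
    exact hφ0 (LinearMap.ext fun u => h u)
  have hψφ : ψ = (ψ u / φ u) • φ := by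
    apply LinearMap.ext
    intro z
    have hz : z - (φ z / φ u) • u ∈ LinearMap.ker φ := by
      simp [LinearMap.mem_ker, div_mul_cancel₀, hu]
    have := hψker _ hz
    simp only [map_sub, map_smul, sub_eq_zero, smul_eq_mul] at this
    rw [LinearMap.smul_apply, smul_eq_mul, this]
    ring
  have hc0 : ψ u / φ u ≠ 0 := by
    intro h
    rw [h, zero_smul] at hψφ
    exact hψ0 hψφ
  apply hLL
  have : Projectivization.mk ℂ ψ hψ0 = Projectivization.mk ℂ φ hφ0 := by
    rw [Projectivization.mk_eq_mk_iff]
    exact ⟨Units.mk0 _ hc0, hψφ.symm⟩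
  simpa [hφ, hψ, Projectivization.mk_rep] using this.symm

lemma two_pi_I_ne_zero' : (2 * (Real.pi:ℂ) * Complex.I) ≠ 0 := by
  simp [Real.pi_ne_zero, Complex.I_ne_zero]

lemma exists_good_log (z : ℂˣ) :
    ∃ l : ℂ, Complex.exp (2 * (Real.pi:ℂ) * Complex.I * l) = (z : ℂ) ∧ 0 ≤ l.re ∧ l.re < 1 := by
  set c : ℂ := Complex.log (z : ℂ) / (2 * (Real.pi:ℂ) * Complex.I) with hc
  have hz : (z : ℂ) ≠ 0 := z.ne_zero
  have hexpc : Complex.exp (2 * (Real.pi:ℂ) * Complex.I * c) = (z : ℂ) := by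
    rw [hc, mul_div_cancel₀ _ two_pi_I_ne_zero', Complex.exp_log hz]
  have hpi : (0:ℝ) < 2 * Real.pi := by positivity
  have hcre : c.re = Complex.arg (z : ℂ) / (2 * Real.pi) := by
    rw [hc, Complex.div_re]
    have h1 : (2 * (Real.pi:ℂ) * Complex.I).re = 0 := by simp
    have h2 : (2 * (Real.pi:ℂ) * Complex.I).im = 2 * Real.pi := by simp
    rw [h1, h2, Complex.normSq_apply, h1, h2, Complex.log_im]
    field_simp
    ring
  have hlb : -(1/2 : ℝ) < c.re := by
    rw [hcre, lt_div_iff₀ hpi]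
    nlinarith [Complex.neg_pi_lt_arg (z : ℂ), Real.pi_pos]
  have hub : c.re ≤ 1/2 := by
    rw [hcre, div_le_iff₀ hpi]
    nlinarith [Complex.arg_le_pi (z : ℂ), Real.pi_pos]
  by_cases h : c.re < 0
  · refine ⟨c + 1, ?_, ?_, ?_⟩
    · rw [mul_add, Complex.exp_add, hexpc, mul_one, Complex.exp_two_pi_mul_I, mul_one]
    · simp only [Complex.add_re, Complex.one_re]; linarith
    · simp only [Complex.add_re, Complex.one_re]; linarith
  · exact ⟨c, hexpc, le_of_not_gt h, by linarith⟩

/-- If every point of multiplicity at least 3 of the line arrangement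
`A = {L 0, …, L (n+1)}` in `ℙ²(ℂ)` lies on the union `L 0 ∪ L 1` of two of its lines, then
every rank one local system on the complement is admissible. -/
theorem admissible_of_two_lines_cover {n : ℕ} (L : Fin (n + 2) → PLine)
    (hdist : Function.Injective L)
    (hcov : ∀ p : PP, multGe3 L p → memL p (L 0) ∨ memL p (L 1))
    (lam : Fin (n + 2) → ℂˣ) (hlam : ∏ j, lam j = 1) :
    Admissible L lam := by
  classical
  obtain ⟨l, hexp, hre0, hre1⟩ :
      ∃ l : Fin (n+2) → ℂ, (∀ j, Complex.exp (2 * (Real.pi:ℂ) * Complex.I * (l j)) = (lam j : ℂ))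
        ∧ (∀ j, 0 ≤ (l j).re) ∧ (∀ j, (l j).re < 1) := by
    choose l h1 h2 h3 using fun j => exists_good_log (lam j)
    exact ⟨l, h1, h2, h3⟩
  have h01 : (0 : Fin (n+2)) ≠ 1 := by simp [Fin.ext_iff]
  -- the total sum is an integer N
  obtain ⟨N, hN⟩ : ∃ N : ℤ, (∑ j, l j) = (N : ℂ) := by
    have h1 : Complex.exp (2 * (Real.pi:ℂ) * Complex.I * ∑ j, l j) = 1 := by
      rw [Finset.mul_sum, Complex.exp_sum]
      simp only [hexp]
      have := congrArg (Units.val) hlam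
      rw [Units.val_one] at this
      rw [← this]
      exact (map_prod (Units.coeHom ℂ) lam Finset.univ).symm
    obtain ⟨m, hm⟩ := Complex.exp_eq_one_iff.mp h1
    refine ⟨m, mul_left_cancel₀ two_pi_I_ne_zero' ?_⟩
    rw [hm]; ring
  -- notation: F p is the set of lines through p, sig p the sum of logs
  set F : PP → Finset (Fin (n+2)) := fun p => Finset.univ.filter (fun j => memL p (L j)) with hF
  set sig : PP → ℂ := fun p => ∑ j ∈ F p, l j with hsig
  -- real part of any partial sum of logs is between 0 and N
  have hA : ∀ G : Finset (Fin (n+2)), (∑ j ∈ G, (l j).re) ≤ (N : ℝ) := by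
    intro G
    have h2 : (∑ j, (l j).re) = (N:ℝ) := by
      have := congrArg Complex.re hN
      simpa [Complex.re_sum] using this
    rw [← h2]
    exact Finset.sum_le_sum_of_subset_of_nonneg (Finset.subset_univ G)
      (fun i _ _ => hre0 i)
  have hN0 : (0:ℝ) ≤ (N:ℝ) := by
    have h2 : (∑ j, (l j).re) = (N:ℝ) := by
      have := congrArg Complex.re hN
      simpa [Complex.re_sum] using this
    rw [← h2]
    exact Finset.sum_nonneg (fun i _ => hre0 i)
  -- the supremum defining k₀
  set M0 : Set ℤ :=
    insert 0 {m : ℤ | ∃ p : PP, multGe3 L p ∧ memL p (L 0) ∧ ¬ memL p (L 1) ∧ sig p = (m:ℂ)}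
    with hM0
  have hM0ne : M0.Nonempty := ⟨0, Set.mem_insert _ _⟩
  have hM0bdd : BddAbove M0 := by
    refine ⟨N, ?_⟩
    rintro m (rfl | ⟨p, _, _, _, hp⟩)
    · exact_mod_cast hN0
    · refine (by exact_mod_cast · : (m:ℝ) ≤ (N:ℝ) → m ≤ N) ?_
      calc (m:ℝ) = (sig p).re := by rw [hp]; simp
        _ = ∑ j ∈ F p, (l j).re := Complex.re_sum _ _
        _ ≤ (N:ℝ) := hA _
  set k₀ : ℤ := sSup M0 with hk₀
  have hk₀mem : k₀ ∈ M0 := Int.csSup_mem hM0ne hM0bdd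
  have hk₀0 : 0 ≤ k₀ := le_csSup hM0bdd (Set.mem_insert _ _)
  have hk₀N : k₀ ≤ N := csSup_le hM0ne (by
    rintro m (rfl | ⟨p, _, _, _, hp⟩)
    · exact_mod_cast hN0
    · refine (by exact_mod_cast · : (m:ℝ) ≤ (N:ℝ) → m ≤ N) ?_
      calc (m:ℝ) = (sig p).re := by rw [hp]; simp
        _ = ∑ j ∈ F p, (l j).re := Complex.re_sum _ _
        _ ≤ (N:ℝ) := hA _)
  set k₁ : ℤ := N - k₀ with hk₁
  have hk₁0 : 0 ≤ k₁ := by omega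
  -- the residues
  set k : Fin (n+2) → ℤ := fun j => if j = 0 then k₀ else if j = 1 then k₁ else 0 with hk
  set a : Fin (n+2) → ℂ := fun j => l j - (k j : ℂ) with ha
  have hknn : ∀ j, 0 ≤ k j := by
    intro j; rw [hk]; dsimp only; split
    · exact hk₀0
    · split; · exact hk₁0
      · exact le_refl 0
  have hksplit : ∀ j, k j = (if j = 0 then k₀ else 0) + (if j = 1 then k₁ else 0) := by
    intro j; rw [hk]; dsimp only
    by_cases hj0 : j = 0
    · subst hj0; simp [h01]
    · simp [hj0]
  have hsumk : ∀ G : Finset (Fin (n+2)),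
      (∑ j ∈ G, k j) = (if 0 ∈ G then k₀ else 0) + (if 1 ∈ G then k₁ else 0) := by
    intro G
    rw [Finset.sum_congr rfl (fun j _ => hksplit j), Finset.sum_add_distrib,
      Finset.sum_ite_eq' G 0 (fun _ => k₀), Finset.sum_ite_eq' G 1 (fun _ => k₁)]
  -- sum of a over any finset
  have hsuma : ∀ G : Finset (Fin (n+2)),
      (∑ j ∈ G, a j) = (∑ j ∈ G, l j) - ((∑ j ∈ G, k j : ℤ) : ℂ) := by
    intro G
    rw [ha]
    push_cast
    rw [Finset.sum_sub_distrib]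
  have hmemF : ∀ (p : PP) (j : Fin (n+2)), j ∈ F p ↔ memL p (L j) := by
    intro p j; rw [hF]; simp
  refine ⟨a, ?_, ?_, ?_, ?_⟩
  · -- exponentials
    intro j
    have : 2 * (Real.pi:ℂ) * Complex.I * a j
        = 2 * (Real.pi:ℂ) * Complex.I * l j - (k j : ℤ) * (2 * (Real.pi:ℂ) * Complex.I) := by
      rw [ha]; push_cast; ring
    rw [this, Complex.exp_sub, Complex.exp_int_mul_two_pi_mul_I, div_one, hexp]
  · -- total sum is zero
    rw [hsuma Finset.univ, hN, hsumk]
    simp [hk₁]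
  · -- individual residues
    intro j
    rintro ⟨m, hm, hmeq⟩
    have hre : (a j).re = (l j).re - (k j : ℝ) := by rw [ha]; simp
    have : (a j).re = (m : ℝ) := by rw [hmeq]; simp
    have h1 : (l j).re - (k j : ℝ) = (m:ℝ) := by rw [← hre, this]
    have h2 : (l j).re < 1 := hre1 j
    have h3 : (0:ℝ) ≤ (k j : ℝ) := by exact_mod_cast hknn j
    have h4 : (1:ℝ) ≤ (m:ℝ) := by exact_mod_cast hm
    linarith
  · -- points of multiplicity ≥ 3
    intro p h3p
    rintro ⟨m, hm, hmeq⟩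
    have haS : aSum L a p = sig p - ((∑ j ∈ F p, k j : ℤ) : ℂ) := hsuma (F p)
    have hsigp : sig p = ((m + ∑ j ∈ F p, k j : ℤ) : ℂ) := by
      have : aSum L a p = (m:ℂ) := hmeq
      rw [haS] at this
      push_cast at this ⊢
      linear_combination this
    have hre_sig : ∀ q : PP, (sig q).re = ∑ j ∈ F q, (l j).re := by
      intro q; simp [hsig, Complex.re_sum]
    by_cases hp0 : memL p (L 0)
    · by_cases hp1 : memL p (L 1)
      · -- p on both lines: k-sum = N, contradiction with hA
        have hkp : (∑ j ∈ F p, k j) = N := by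
          rw [hsumk, if_pos ((hmemF p 0).mpr hp0), if_pos ((hmemF p 1).mpr hp1)]; omega
        have h1 : (sig p).re = ((m + N : ℤ) : ℝ) := by rw [hsigp, hkp]; simp
        have h2 := hA (F p)
        rw [hre_sig p] at h1
        rw [h1] at h2
        have h4 : (m:ℝ) ≤ 0 := by push_cast at h2; linarith
        have : m ≤ 0 := by exact_mod_cast h4
        omega
      · -- p on L0 only: membership in M0 beats the sup
        have hkp : (∑ j ∈ F p, k j) = k₀ := by
          rw [hsumk, if_pos ((hmemF p 0).mpr hp0), if_neg (fun h => hp1 ((hmemF p 1).mp h))]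
          omega
        have hmem : (m + k₀) ∈ M0 := by
          rw [hM0]
          refine Set.mem_insert_of_mem _ ⟨p, h3p, hp0, hp1, ?_⟩
          rw [hsigp, hkp]
        have := le_csSup hM0bdd hmem
        omega
    · -- p on L1 only
      have hp1 : memL p (L 1) := (hcov p h3p).resolve_left hp0
      have hkp : (∑ j ∈ F p, k j) = k₁ := by
        rw [hsumk, if_neg (fun h => hp0 ((hmemF p 0).mp h)), if_pos ((hmemF p 1).mpr hp1)]
        omega
      rcases hk₀mem with hk₀z | ⟨q, hq3, hq0, hq1, hqsig⟩
      · -- k₀ = 0, so k₁ = N and we contradict hA again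
        have hkp' : (∑ j ∈ F p, k j) = N := by omega
        have h1 : (sig p).re = ((m + N : ℤ) : ℝ) := by rw [hsigp, hkp']; simp
        have h2 := hA (F p)
        rw [hre_sig p] at h1
        rw [h1] at h2
        have h4 : (m:ℝ) ≤ 0 := by push_cast at h2; linarith
        have : m ≤ 0 := by exact_mod_cast h4
        omega
      · -- k₀ realized by a point q on L0; use the overlap bound
        have hpq : p ≠ q := fun h => hp0 (h ▸ hq0)
        have hcard : (F p ∩ F q).card ≤ 1 := by
          rw [Finset.card_le_one]
          intro i hi j hj
          by_contra hij
          rw [Finset.mem_inter] at hi hj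
          refine two_lines_one_point (fun h => hij (hdist h)) hpq
            ((hmemF p i).mp hi.1) ((hmemF p j).mp hj.1)
            ((hmemF q i).mp hi.2) ((hmemF q j).mp hj.2)
        have hinter : (∑ j ∈ F p ∩ F q, (l j).re) < 1 := by
          obtain ⟨x, hx⟩ := Finset.card_le_one_iff_subset_singleton.mp hcard
          calc (∑ j ∈ F p ∩ F q, (l j).re) ≤ ∑ j ∈ {x}, (l j).re :=
                Finset.sum_le_sum_of_subset_of_nonneg hx (fun i _ _ => hre0 i)
            _ = (l x).re := Finset.sum_singleton _ _
            _ < 1 := hre1 x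
        have hunion : (∑ j ∈ F p ∪ F q, (l j).re) ≤ (N:ℝ) := hA _
        have hsum2 : (∑ j ∈ F p, (l j).re) + (∑ j ∈ F q, (l j).re) < (N:ℝ) + 1 := by
          rw [← Finset.sum_union_inter]
          linarith
        have h1 : (∑ j ∈ F p, (l j).re) = ((m + k₁ : ℤ) : ℝ) := by
          rw [← hre_sig p, hsigp, hkp]; simp
        have h2 : (∑ j ∈ F q, (l j).re) = ((k₀ : ℤ) : ℝ) := by
          rw [← hre_sig q, hqsig]; simp
        rw [h1, h2] at hsum2
        have : m + k₁ + k₀ < N + 1 := by exact_mod_cast hsum2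
        omega
end
end

section
/- Let L_0, L_1, …, L_n be pairwise distinct lines in ℙ²(ℂ) and a_0, …, a_n ∈ ℂ with ∑_{j=0}^n a_j = 0 and Re(a_j) ∈ [0,1) for all j ≥ 1. Let p and q be two distinct points of ℙ² with p ∉ L_0 and q ∈ L_0. Then Re(a_0) + ∑_{j ≥ 1, p ∈ L_j} Re(a_j) + ∑_{j ≥ 1, q ∈ L_j} Re(a_j) < 1. (This is the key inequality in the proof of the C_2 case: since p ≠ q, at most one of the lines L_1, …, L_n passes through both p and q.) -/
noncomputable section

open Finset Complex

attribute [local instance] Classical.propDecidable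

lemma line_unique_s5 (p q : PP) (hpq : p ≠ q) (M M' : PLine)
    (h1 : memL p M) (h2 : memL q M) (h3 : memL p M') (h4 : memL q M') : M = M' := by
  set u := p.rep with hu
  set v := q.rep with hv
  have hu0 : u ≠ 0 := p.rep_nonzero
  have hv0 : v ≠ 0 := q.rep_nonzero
  -- u, v linearly independent
  have hli : LinearIndependent ℂ ![u, v] := by
    rw [linearIndependent_fin2]
    refine ⟨hv0, fun c hc => ?_⟩
    simp only [Matrix.cons_val_zero, Matrix.cons_val_one, Matrix.head_cons] at hc
    have hc0 : c ≠ 0 := by rintro rfl; simp at hc; exact hu0 hc.symm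
    apply hpq
    rw [← p.mk_rep, ← q.mk_rep]
    exact (Projectivization.mk_eq_mk_iff' ℂ _ _ hu0 hv0).2 ⟨c, hc⟩
  have key : ∀ (f : Module.Dual ℂ (Fin 3 → ℂ)), f ≠ 0 → f u = 0 → f v = 0 →
      LinearMap.ker f = Submodule.span ℂ (Set.range ![u, v]) := by
    intro f hf hfu hfv
    have hle : Submodule.span ℂ (Set.range ![u, v]) ≤ LinearMap.ker f := by
      rw [Submodule.span_le]
      rintro x ⟨i, rfl⟩
      fin_cases i <;> simp [LinearMap.mem_ker, hfu, hfv]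
    refine (Submodule.eq_of_le_of_finrank_le hle ?_).symm
    have h1 : Module.finrank ℂ (Submodule.span ℂ (Set.range ![u, v])) = 2 := by
      rw [finrank_span_eq_card hli]; simp
    have h2 : Module.finrank ℂ (LinearMap.ker f) = 2 := by
      have := Module.Dual.finrank_ker_add_one_of_ne_zero hf
      have h3 : Module.finrank ℂ (Fin 3 → ℂ) = 3 := by simp
      omega
    rw [h1, h2]
  have hf0 : M.rep ≠ 0 := M.rep_nonzero
  have hg0 : M'.rep ≠ 0 := M'.rep_nonzero
  have hker : LinearMap.ker M'.rep ≤ LinearMap.ker M.rep := by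
    rw [key M'.rep hg0 h3 h4, key M.rep hf0 h1 h2]
  have hmem : M.rep ∈ Submodule.span ℂ (Set.range fun _ : Unit => M'.rep) :=
    mem_span_of_iInf_ker_le_ker (by simpa using hker)
  rw [Set.range_const, Submodule.mem_span_singleton] at hmem
  obtain ⟨c, hc⟩ := hmem
  have hc0 : c ≠ 0 := by rintro rfl; simp at hc; exact hf0 hc.symm
  rw [← M.mk_rep, ← M'.mk_rep]
  exact (Projectivization.mk_eq_mk_iff' ℂ _ _ hf0 hg0).2 ⟨c, hc⟩

/-- Key inequality in the proof of the `C₂` case: for pairwise distinct lines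
`L 0, …, L n`, residues with total sum `0` and `Re (a j) ∈ [0,1)` for `j ≥ 1`, and distinct
points `p ∉ L 0`, `q ∈ L 0`, one has
`Re (a 0) + ∑_{j ≥ 1, p ∈ L j} Re (a j) + ∑_{j ≥ 1, q ∈ L j} Re (a j) < 1`. -/
theorem key_inequality_C2 {n : ℕ} (L : Fin (n + 1) → PLine)
    (hdist : Function.Injective L) (a : Fin (n + 1) → ℂ)
    (hsum : ∑ j, a j = 0)
    (hre : ∀ j, j ≠ 0 → (a j).re ∈ Set.Ico (0 : ℝ) 1)
    (p q : PP) (hpq : p ≠ q) (hp : ¬ memL p (L 0)) (hq : memL q (L 0)) :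
    (a 0).re + (∑ j ∈ Finset.univ.filter (fun j => j ≠ 0 ∧ memL p (L j)), (a j).re)
      + (∑ j ∈ Finset.univ.filter (fun j => j ≠ 0 ∧ memL q (L j)), (a j).re) < 1 := by

  classical
  set S : Finset (Fin (n+1)) := univ.filter (fun j => j ≠ 0) with hS
  set P : Finset (Fin (n+1)) := univ.filter (fun j => j ≠ 0 ∧ memL p (L j)) with hP
  set Q : Finset (Fin (n+1)) := univ.filter (fun j => j ≠ 0 ∧ memL q (L j)) with hQ
  have hPS : P ⊆ S := by intro j hj; simp only [hP, hS, mem_filter] at *; exact ⟨hj.1, hj.2.1⟩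
  have hQS : Q ⊆ S := by intro j hj; simp only [hP, hQ, hS, mem_filter] at *; exact ⟨hj.1, hj.2.1⟩
  have ha0 : (a 0).re + ∑ j ∈ S, (a j).re = 0 := by
    have h1 : a 0 + ∑ j ∈ S, a j = 0 := by
      rw [hS, Finset.filter_ne', Finset.add_sum_erase univ a (mem_univ 0)]; exact hsum
    have := congrArg Complex.re h1
    simpa [Complex.add_re, Complex.re_sum] using this
  have hcard : (P ∩ Q).card ≤ 1 := by
    rw [Finset.card_le_one]
    intro j hj k hk
    simp only [hP, hQ, Finset.mem_inter, mem_filter] at hj hk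
    exact hdist (line_unique_s5 p q hpq (L j) (L k) hj.1.2.2 hj.2.2.2 hk.1.2.2 hk.2.2.2)
  have hnn : ∀ j ∈ S, 0 ≤ (a j).re := by
    intro j hj; simp only [hS, mem_filter] at hj; exact (hre j hj.2).1
  have h1 : ∑ j ∈ P, (a j).re + ∑ j ∈ Q, (a j).re
      = ∑ j ∈ P ∪ Q, (a j).re + ∑ j ∈ P ∩ Q, (a j).re :=
    (Finset.sum_union_inter).symm
  have h2 : ∑ j ∈ P ∪ Q, (a j).re ≤ ∑ j ∈ S, (a j).re :=
    Finset.sum_le_sum_of_subset_of_nonneg (Finset.union_subset hPS hQS)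
      (fun j hj _ => hnn j hj)
  have h3 : ∑ j ∈ P ∩ Q, (a j).re < 1 := by
    rcases Finset.eq_empty_or_nonempty (P ∩ Q) with h | ⟨j, hj⟩
    · simp [h]
    · have heq : P ∩ Q = {j} := by
        ext k
        simp only [Finset.mem_singleton]
        exact ⟨fun hk => Finset.card_le_one.mp hcard k hk j hj, fun hk => hk ▸ hj⟩
      rw [heq, Finset.sum_singleton]
      have hj0 : j ≠ 0 := by
        have := Finset.mem_of_mem_inter_left hj
        simp only [hP, mem_filter] at this; exact this.2.1
      exact (hre j hj0).2
  linarith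
end
end

section
/- Let L_0, L_1, …, L_n be pairwise distinct lines in ℙ²(ℂ) and a_0, …, a_n ∈ ℂ with ∑_{j=0}^n a_j = 0 and Re(a_j) ∈ [0,1) for all j ≥ 1. Let p_1, p_2, q be points of ℙ² with p_1 ∉ L_0, p_2 ∉ L_0, q ∈ L_0. Assume that no line L_j with j ≥ 1 contains all three of p_1, p_2, q, and that at most one index j ≥ 1 is such that L_j contains at least two of the points p_1, p_2, q. Then Re(a_0) + ∑_{j ≥ 1, p_1 ∈ L_j} Re(a_j) + ∑_{j ≥ 1, p_2 ∈ L_j} Re(a_j) + ∑_{j ≥ 1, q ∈ L_j} Re(a_j) < 1. (This is the key inequality in the proof of the C_3 proposition.) -/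
noncomputable section

open Finset Complex

attribute [local instance] Classical.propDecidable

/-- Key inequality in the proof of the `C₃` proposition: for pairwise distinct
lines `L 0, …, L n`, residues with total sum `0` and `Re (a j) ∈ [0,1)` for `j ≥ 1`, and points
`p₁, p₂ ∉ L 0`, `q ∈ L 0` such that no line `L j` with `j ≥ 1` contains all three points and at
most one index `j ≥ 1` gives a line through at least two of them, one has
`Re (a 0) + ∑_{j ≥ 1, p₁ ∈ L j} Re (a j) + ∑_{j ≥ 1, p₂ ∈ L j} Re (a j)
  + ∑_{j ≥ 1, q ∈ L j} Re (a j) < 1`. -/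
theorem key_inequality_C3 {n : ℕ} (L : Fin (n + 1) → PLine)
    (hdist : Function.Injective L) (a : Fin (n + 1) → ℂ)
    (hsum : ∑ j, a j = 0)
    (hre : ∀ j, j ≠ 0 → (a j).re ∈ Set.Ico (0 : ℝ) 1)
    (p₁ p₂ q : PP) (hp₁ : ¬ memL p₁ (L 0)) (hp₂ : ¬ memL p₂ (L 0)) (hq : memL q (L 0))
    (hno3 : ∀ j, j ≠ 0 → ¬ (memL p₁ (L j) ∧ memL p₂ (L j) ∧ memL q (L j)))
    (h2 : ∀ j j' : Fin (n + 1),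
      (j ≠ 0 ∧ ((memL p₁ (L j) ∧ memL p₂ (L j)) ∨ (memL p₁ (L j) ∧ memL q (L j)) ∨
        (memL p₂ (L j) ∧ memL q (L j)))) →
      (j' ≠ 0 ∧ ((memL p₁ (L j') ∧ memL p₂ (L j')) ∨ (memL p₁ (L j') ∧ memL q (L j')) ∨
        (memL p₂ (L j') ∧ memL q (L j')))) → j = j') :
    (a 0).re + (∑ j ∈ Finset.univ.filter (fun j => j ≠ 0 ∧ memL p₁ (L j)), (a j).re)
      + (∑ j ∈ Finset.univ.filter (fun j => j ≠ 0 ∧ memL p₂ (L j)), (a j).re)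
      + (∑ j ∈ Finset.univ.filter (fun j => j ≠ 0 ∧ memL q (L j)), (a j).re) < 1 := by
  classical
  set S := Finset.univ.filter (fun j : Fin (n+1) => j ≠ 0) with hS
  set P := fun j : Fin (n+1) => (memL p₁ (L j) ∧ memL p₂ (L j)) ∨
      (memL p₁ (L j) ∧ memL q (L j)) ∨ (memL p₂ (L j) ∧ memL q (L j)) with hP
  have hreS : ∀ j ∈ S, 0 ≤ (a j).re ∧ (a j).re < 1 := by
    intro j hj
    have hj0 : j ≠ 0 := by simpa [hS] using hj
    exact ⟨(hre j hj0).1, (hre j hj0).2⟩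
  -- Re (a 0) = - sum over S
  have h0 : (a 0).re = -∑ j ∈ S, (a j).re := by
    have hr : ∑ j, (a j).re = 0 := by
      rw [← Complex.re_sum, hsum]; simp
    have hsplit := Finset.sum_filter_add_sum_filter_not Finset.univ
      (fun j : Fin (n+1) => j ≠ 0) (fun j => (a j).re)
    have hzero : Finset.univ.filter (fun j : Fin (n+1) => ¬ j ≠ 0) = {0} := by
      ext j; simp
    rw [hzero, Finset.sum_singleton, hr] at hsplit
    rw [hS]
    linarith
  -- rewrite each filtered sum as a sum over S of an indicator
  have hfil : ∀ (P' : PP),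
      (∑ j ∈ Finset.univ.filter (fun j => j ≠ 0 ∧ memL P' (L j)), (a j).re)
        = ∑ j ∈ S, (if memL P' (L j) then (a j).re else 0) := by
    intro P'
    rw [hS, ← Finset.filter_filter, Finset.sum_filter]
  rw [hfil p₁, hfil p₂, hfil q, h0]
  have hle : ∀ j ∈ S,
      (if memL p₁ (L j) then (a j).re else 0) + (if memL p₂ (L j) then (a j).re else 0)
        + (if memL q (L j) then (a j).re else 0) - (a j).re
        ≤ (if P j then (a j).re else 0) := by
    intro j hj
    have hj0 : j ≠ 0 := by simpa [hS] using hj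
    have h01 := hreS j hj
    have h3 := hno3 j hj0
    simp only [hP]
    split_ifs <;> first | linarith | tauto
  have hsum1 : -∑ j ∈ S, (a j).re
      + (∑ j ∈ S, (if memL p₁ (L j) then (a j).re else 0))
      + (∑ j ∈ S, (if memL p₂ (L j) then (a j).re else 0))
      + (∑ j ∈ S, (if memL q (L j) then (a j).re else 0))
      ≤ ∑ j ∈ S, (if P j then (a j).re else 0) := by
    have := Finset.sum_le_sum hle
    rw [Finset.sum_sub_distrib, Finset.sum_add_distrib, Finset.sum_add_distrib] at this
    linarith
  have hcard : (S.filter P).card ≤ 1 := by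
    apply Finset.card_le_one.2
    intro j hj j' hj'
    rw [Finset.mem_filter, hS, Finset.mem_filter] at hj hj'
    exact h2 j j' ⟨hj.1.2, hj.2⟩ ⟨hj'.1.2, hj'.2⟩
  have hfin : ∑ j ∈ S, (if P j then (a j).re else 0) < 1 := by
    rw [← Finset.sum_filter]
    rcases Finset.card_le_one_iff_subset_singleton.1 hcard with ⟨x, hx⟩
    rcases Finset.subset_singleton_iff.1 hx with h | h
    · rw [h]; simp
    · rw [h, Finset.sum_singleton]
      have hxS : x ∈ S := by
        have : x ∈ S.filter P := by rw [h]; simp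
        exact Finset.mem_of_mem_filter x this
      exact (hreS x hxS).2
  linarith
end
end

section
/- Let A = {L_0, L_1, …, L_n} be a line arrangement in ℙ²(ℂ) with L_0, L_1, L_2 passing through a common point O, such that every point of multiplicity at least 3 in A lies on L_0 ∪ L_1 ∪ L_2. Let λ_0, …, λ_n ∈ ℂ* with λ_0 ⋯ λ_n = 1 define a rank one local system, with normalized residues a_0, …, a_n, and define m_1, m_2, P_1, P_2 and Y_q as in the context. Assume that one of the following conditions holds: (i) P_1 = ∅; (ii) P_2 = ∅; (iii) for each point q ≠ O on L_0 of multiplicity at least 3 in A, either (a) both P_1 \ Y_q and P_2 \ Y_q are non-empty, or (b) there exist i ≠ j in {1,2}, a point p_i ∈ P_i \ Y_q and a point p_j ∈ P_j such that the projective line determined by p_i and p_j does not belong to A. Then the local system is admissible. -/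
noncomputable section

open Finset Complex

attribute [local instance] Classical.propDecidable

/-! ### Auxiliary material for the proof -/

section Aux

/-- The finset of indices of lines through a point. -/
def Tset {N : ℕ} (L : Fin N → PLine) (p : PP) : Finset (Fin N) :=
  Finset.univ.filter (fun j => memL p (L j))

/-- The finset of indices of lines *not* through a point. -/
def Cset {N : ℕ} (L : Fin N → PLine) (p : PP) : Finset (Fin N) :=
  Finset.univ.filter (fun j => ¬ memL p (L j))

lemma mem_Tset {N : ℕ} (L : Fin N → PLine) (p : PP) (j : Fin N) :
    j ∈ Tset L p ↔ memL p (L j) := by simp [Tset]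

lemma mem_Cset {N : ℕ} (L : Fin N → PLine) (p : PP) (j : Fin N) :
    j ∈ Cset L p ↔ ¬ memL p (L j) := by simp [Cset]

lemma aSum_eq {N : ℕ} (L : Fin N → PLine) (a : Fin N → ℂ) (p : PP) :
    aSum L a p = ∑ j ∈ Tset L p, a j := rfl

lemma aSum_re {N : ℕ} (L : Fin N → PLine) (a : Fin N → ℂ) (p : PP) :
    (aSum L a p).re = ∑ j ∈ Tset L p, (a j).re := Complex.re_sum _ _

lemma Tset_Cset_sum {N : ℕ} (L : Fin N → PLine) (p : PP) (f : Fin N → ℝ) :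
    ∑ j ∈ Tset L p, f j + ∑ j ∈ Cset L p, f j = ∑ j, f j :=
  Finset.sum_filter_add_sum_filter_not _ _ _

/-- In a 3-dimensional space, two independent functionals and two independent vectors cannot
pair to zero in all four ways. -/
lemma not_both_indep (f g : Module.Dual ℂ (Fin 3 → ℂ)) (u v : Fin 3 → ℂ)
    (hfg : LinearIndependent ℂ ![f, g]) (huv : LinearIndependent ℂ ![u, v])
    (h1 : f u = 0) (h2 : f v = 0) (h3 : g u = 0) (h4 : g v = 0) : False := by
  set W : Submodule ℂ (Fin 3 → ℂ) := Submodule.span ℂ {u, v} with hW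
  have hrangeuv : Set.range ![u, v] = {u, v} := by
    simp [Matrix.range_cons, Matrix.range_empty, Set.insert_union, Set.pair_comm v u]
  have hWrank : Module.finrank ℂ W = 2 := by
    have := finrank_span_eq_card huv
    rw [hrangeuv] at this
    simpa using this
  have hmemf : f ∈ W.dualAnnihilator := by
    rw [Submodule.mem_dualAnnihilator]
    intro w hw
    have : W ≤ LinearMap.ker f := by
      rw [hW, Submodule.span_le]
      intro x hx
      rcases hx with h | h
      · simp [h, LinearMap.mem_ker, h1]
      · simp at h; simp [h, LinearMap.mem_ker, h2]
    exact this hw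
  have hmemg : g ∈ W.dualAnnihilator := by
    rw [Submodule.mem_dualAnnihilator]
    intro w hw
    have : W ≤ LinearMap.ker g := by
      rw [hW, Submodule.span_le]
      intro x hx
      rcases hx with h | h
      · simp [h, LinearMap.mem_ker, h3]
      · simp at h; simp [h, LinearMap.mem_ker, h4]
    exact this hw
  have hind : LinearIndependent ℂ
      (fun i : Fin 2 => (![(⟨f, hmemf⟩ : W.dualAnnihilator), ⟨g, hmemg⟩] : Fin 2 → W.dualAnnihilator) i) := by
    apply LinearIndependent.of_comp (W.dualAnnihilator.subtype)
    convert hfg using 1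
    ext i
    fin_cases i <;> rfl
    rfl
  have h2le : 2 ≤ Module.finrank ℂ W.dualAnnihilator := by
    simpa using hind.fintype_card_le_finrank
  have hann : Module.finrank ℂ W.dualAnnihilator = 1 := by
    have e := (Subspace.quotEquivAnnihilator W).finrank_eq
    have q := Submodule.finrank_quotient_add_finrank W
    have hV : Module.finrank ℂ (Fin 3 → ℂ) = 3 := by simp
    omega
  omega

lemma indep_of_ne {K V : Type*} [Field K] [AddCommGroup V] [Module K V]
    {p q : Projectivization K V} (h : p ≠ q) : LinearIndependent K ![p.rep, q.rep] := by
  rw [linearIndependent_fin2]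
  refine ⟨by simpa using q.rep_nonzero, fun α hα => ?_⟩
  simp only [Matrix.cons_val_one, Matrix.head_cons, Matrix.cons_val_zero] at hα
  apply h
  have hα0 : α ≠ 0 := by rintro rfl; exact p.rep_nonzero (by simpa using hα.symm)
  rw [← p.mk_rep, ← q.mk_rep, Projectivization.mk_eq_mk_iff]
  exact ⟨Units.mk0 α hα0, hα⟩

/-- Two distinct points lie on at most one common line. -/
lemma eq_line {x y : PP} {Lk Lm : PLine} (hxy : x ≠ y) (hk : memL x Lk) (hk' : memL y Lk)
    (hm : memL x Lm) (hm' : memL y Lm) : Lk = Lm := by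
  by_contra hL
  exact not_both_indep _ _ _ _ (indep_of_ne hL) (indep_of_ne hxy) hk hk' hm hm'

/-- Two distinct lines meet in at most one point. -/
lemma eq_point {x y : PP} {Lk Lm : PLine} (hL : Lk ≠ Lm) (hk : memL x Lk) (hm : memL x Lm)
    (hk' : memL y Lk) (hm' : memL y Lm) : x = y := by
  by_contra hxy
  exact not_both_indep _ _ _ _ (indep_of_ne hL) (indep_of_ne hxy) hk hk' hm hm'

lemma sum_lt_one' {ι : Type*} [DecidableEq ι] (U : Finset ι) (r : ι → ℝ)
    (hcard : U.card ≤ 1) (h : ∀ j ∈ U, r j < 1) (h0 : ∀ j ∈ U, 0 ≤ r j) :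
    ∑ j ∈ U, r j < 1 := by
  rcases U.eq_empty_or_nonempty with rfl | ⟨x, hx⟩
  · simp
  · have hU : U = {x} := Finset.eq_singleton_iff_unique_mem.mpr
      ⟨hx, fun y hy => Finset.card_le_one.mp hcard y hy x hx⟩
    rw [hU, Finset.sum_singleton]
    exact h x hx

lemma keyIneq {ι : Type*} [DecidableEq ι] (S T1 T2 : Finset ι) (r : ι → ℝ) (m1 m2 : ℝ)
    (h1 : T1 ⊆ S) (hS : ∀ j ∈ S, 0 ≤ r j)
    (hs1 : ∑ j ∈ T1, r j = m1) (hs2 : ∑ j ∈ T2, r j = m2)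
    (hexc : ∑ j ∈ (T2 \ S) ∪ (T1 ∩ T2), r j < 1) :
    m1 + m2 - 1 < ∑ j ∈ S, r j := by
  set E : Finset ι := (T2 \ S) ∪ (T1 ∩ T2) with hE
  have hEsub : E ⊆ T2 := by
    intro j hj
    rw [hE, Finset.mem_union] at hj
    rcases hj with h | h
    · exact (Finset.mem_sdiff.mp h).1
    · exact (Finset.mem_inter.mp h).2
  have e1 : ∑ j ∈ T2 \ E, r j + ∑ j ∈ E, r j = ∑ j ∈ T2, r j := Finset.sum_sdiff hEsub
  have hdisj : Disjoint T1 (T2 \ E) := by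
    rw [Finset.disjoint_right]
    intro j hj hj1
    rw [Finset.mem_sdiff] at hj
    exact hj.2 (Finset.mem_union_right _ (Finset.mem_inter.mpr ⟨hj1, hj.1⟩))
  have e2 : ∑ j ∈ T1 ∪ (T2 \ E), r j = ∑ j ∈ T1, r j + ∑ j ∈ T2 \ E, r j :=
    Finset.sum_union hdisj
  have hsub : T1 ∪ (T2 \ E) ⊆ S := by
    intro j hj
    rcases Finset.mem_union.mp hj with h | h
    · exact h1 h
    · rw [Finset.mem_sdiff] at h
      by_contra hjS
      exact h.2 (Finset.mem_union_left _ (Finset.mem_sdiff.mpr ⟨h.1, hjS⟩))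
  have e3 : ∑ j ∈ T1 ∪ (T2 \ E), r j ≤ ∑ j ∈ S, r j :=
    Finset.sum_le_sum_of_subset_of_nonneg hsub (fun i hi _ => hS i hi)
  linarith

end Aux


/-- Proposition for arrangements of type `C₃` with the three distinguished
lines `L 0, L 1, L 2` concurrent at `O` and containing all points of multiplicity at least 3.
Given normalized residues `a`, for `i = 1, 2` let `mᵢ` be the maximum of
`b p = Re (a(p))` over the points `p ≠ O` of multiplicity at least 3 on `L i` with
`b p ∈ ℤ_{>0}` (and `mᵢ = 0` if there are none; this is encoded by `mᵢ` being the greatest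
element of the corresponding set of values together with `0`), and let `Pᵢ` be the set of such
extremal points with `b p = mᵢ`.  If (i) `P₁ = ∅`, or (ii) `P₂ = ∅`, or (iii) for every point
`q ≠ O` of multiplicity at least 3 on `L 0`, either (a) both `P₁ \ Y_q` and `P₂ \ Y_q` are
non-empty (`Y_q` being the union of the lines of the arrangement through `q`), or (b) there are
`i ≠ j` in `{1,2}`, `pᵢ ∈ Pᵢ \ Y_q` and `pⱼ ∈ Pⱼ` such that the line determined by `pᵢ` and
`pⱼ` is not a line of the arrangement, then the local system is admissible. -/
theorem admissible_of_classC3_concurrent {n : ℕ} (L : Fin (n + 3) → PLine)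
    (hdist : Function.Injective L)
    (O : PP) (hO0 : memL O (L 0)) (hO1 : memL O (L 1)) (hO2 : memL O (L 2))
    (hcov : ∀ p : PP, multGe3 L p → memL p (L 0) ∨ memL p (L 1) ∨ memL p (L 2))
    (lam : Fin (n + 3) → ℂˣ) (hlam : ∏ j, lam j = 1)
    (a : Fin (n + 3) → ℂ)
    (haexp : ∀ j, Complex.exp (2 * (Real.pi : ℂ) * Complex.I * a j) = (lam j : ℂ))
    (hasum : ∑ j, a j = 0)
    (hare : ∀ j, j ≠ 0 → (a j).re ∈ Set.Ico (0 : ℝ) 1)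
    (m₁ m₂ : ℝ) (P₁ P₂ : Set PP)
    (hm₁ : IsGreatest (insert (0 : ℝ) ((fun p => (aSum L a p).re) ''
      {p : PP | p ≠ O ∧ multGe3 L p ∧ memL p (L 1) ∧ (aSum L a p).re ∈ PosIntR})) m₁)
    (hm₂ : IsGreatest (insert (0 : ℝ) ((fun p => (aSum L a p).re) ''
      {p : PP | p ≠ O ∧ multGe3 L p ∧ memL p (L 2) ∧ (aSum L a p).re ∈ PosIntR})) m₂)
    (hP₁ : P₁ = {p : PP | p ≠ O ∧ multGe3 L p ∧ memL p (L 1) ∧ (aSum L a p).re ∈ PosIntR ∧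
      (aSum L a p).re = m₁})
    (hP₂ : P₂ = {p : PP | p ≠ O ∧ multGe3 L p ∧ memL p (L 2) ∧ (aSum L a p).re ∈ PosIntR ∧
      (aSum L a p).re = m₂})
    (hcond : P₁ = ∅ ∨ P₂ = ∅ ∨
      (∀ q : PP, q ≠ O → multGe3 L q → memL q (L 0) →
        -- Y_q is the set {x | ∃ k, memL q (L k) ∧ memL x (L k)}
        (((P₁ \ {x : PP | ∃ k, memL q (L k) ∧ memL x (L k)}).Nonempty ∧
          (P₂ \ {x : PP | ∃ k, memL q (L k) ∧ memL x (L k)}).Nonempty) ∨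
         (∃ x ∈ P₁ \ {x : PP | ∃ k, memL q (L k) ∧ memL x (L k)}, ∃ y ∈ P₂,
            ∀ k, ¬ (memL x (L k) ∧ memL y (L k))) ∨
         (∃ x ∈ P₂ \ {x : PP | ∃ k, memL q (L k) ∧ memL x (L k)}, ∃ y ∈ P₁,
            ∀ k, ¬ (memL x (L k) ∧ memL y (L k)))))) :
    Admissible L lam := by
  
  classical
  have h01 : (0 : Fin (n+3)) ≠ 1 := by simp [Fin.ext_iff]
  have h02 : (0 : Fin (n+3)) ≠ 2 := by simp [Fin.ext_iff, Nat.mod_eq_of_lt (by omega : 2 < n+3)]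
  have h12 : (1 : Fin (n+3)) ≠ 2 := by simp [Fin.ext_iff, Nat.mod_eq_of_lt (by omega : 2 < n+3)]
  have hL01 : L 0 ≠ L 1 := fun h => h01 (hdist h)
  have hL02 : L 0 ≠ L 2 := fun h => h02 (hdist h)
  have hL12 : L 1 ≠ L 2 := fun h => h12 (hdist h)
  have not0_of_1 : ∀ x : PP, x ≠ O → memL x (L 1) → ¬ memL x (L 0) :=
    fun x hx h1 h0 => hx (eq_point hL01 h0 h1 hO0 hO1)
  have not0_of_2 : ∀ x : PP, x ≠ O → memL x (L 2) → ¬ memL x (L 0) :=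
    fun x hx h2 h0 => hx (eq_point hL02 h0 h2 hO0 hO2)
  have not1_of_0 : ∀ x : PP, x ≠ O → memL x (L 0) → ¬ memL x (L 1) :=
    fun x hx h0 h1 => hx (eq_point hL01 h0 h1 hO0 hO1)
  have not2_of_0 : ∀ x : PP, x ≠ O → memL x (L 0) → ¬ memL x (L 2) :=
    fun x hx h0 h2 => hx (eq_point hL02 h0 h2 hO0 hO2)
  have not2_of_1 : ∀ x : PP, x ≠ O → memL x (L 1) → ¬ memL x (L 2) :=
    fun x hx h1 h2 => hx (eq_point hL12 h1 h2 hO1 hO2)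
  have not1_of_2 : ∀ x : PP, x ≠ O → memL x (L 2) → ¬ memL x (L 1) :=
    fun x hx h2 h1 => hx (eq_point hL12 h1 h2 hO1 hO2)
  have ne12 : ∀ x y : PP, x ≠ O → memL x (L 1) → y ≠ O → memL y (L 2) → x ≠ y :=
    fun x y hx h1 hy h2 hxy => (not2_of_1 x hx h1) (hxy ▸ h2)
  have ccard : ∀ (x y : PP), x ≠ y → ∀ U : Finset (Fin (n+3)),
      (∀ j ∈ U, memL x (L j) ∧ memL y (L j)) → U.card ≤ 1 := by
    intro x y hxy U hU
    rw [Finset.card_le_one]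
    intro i hi j hj
    exact hdist (eq_line hxy (hU i hi).1 (hU i hi).2 (hU j hj).1 (hU j hj).2)
  have hM1ex : ∃ M1 : ℤ, 0 ≤ M1 ∧ (M1 : ℝ) = m₁ ∧ (m₁ = 0 ∨ ∃ p, p ∈ P₁) := by
    rcases Set.mem_insert_iff.mp hm₁.1 with h | ⟨p, hpmem, hbp⟩
    · exact ⟨0, le_refl 0, by rw [h]; simp, Or.inl h⟩
    · obtain ⟨k, hk, hbk⟩ := hpmem.2.2.2
      refine ⟨k, by omega, ?_, Or.inr ⟨p, ?_⟩⟩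
      · rw [← hbp]; exact hbk.symm
      · rw [hP₁]; exact ⟨hpmem.1, hpmem.2.1, hpmem.2.2.1, hpmem.2.2.2, hbp⟩
  have hM2ex : ∃ M2 : ℤ, 0 ≤ M2 ∧ (M2 : ℝ) = m₂ ∧ (m₂ = 0 ∨ ∃ p, p ∈ P₂) := by
    rcases Set.mem_insert_iff.mp hm₂.1 with h | ⟨p, hpmem, hbp⟩
    · exact ⟨0, le_refl 0, by rw [h]; simp, Or.inl h⟩
    · obtain ⟨k, hk, hbk⟩ := hpmem.2.2.2
      refine ⟨k, by omega, ?_, Or.inr ⟨p, ?_⟩⟩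
      · rw [← hbp]; exact hbk.symm
      · rw [hP₂]; exact ⟨hpmem.1, hpmem.2.1, hpmem.2.2.1, hpmem.2.2.2, hbp⟩
  obtain ⟨M1, hM1nn, hM1re, hM1alt⟩ := hM1ex
  obtain ⟨M2, hM2nn, hM2re, hM2alt⟩ := hM2ex
  have unpack₁ : ∀ p, p ∈ P₁ → p ≠ O ∧ memL p (L 1) ∧
      (∑ j ∈ Tset L p, (a j).re = m₁) ∧ (∀ j ∈ Tset L p, j ≠ 0) := by
    intro p hp
    rw [hP₁] at hp
    obtain ⟨hpO, hml, hp1, hpos, hval⟩ := hp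
    refine ⟨hpO, hp1, by rw [← aSum_re]; exact hval, ?_⟩
    intro j hj hj0
    rw [hj0, mem_Tset] at hj
    exact not0_of_1 p hpO hp1 hj
  have unpack₂ : ∀ p, p ∈ P₂ → p ≠ O ∧ memL p (L 2) ∧
      (∑ j ∈ Tset L p, (a j).re = m₂) ∧ (∀ j ∈ Tset L p, j ≠ 0) := by
    intro p hp
    rw [hP₂] at hp
    obtain ⟨hpO, hml, hp2, hpos, hval⟩ := hp
    refine ⟨hpO, hp2, by rw [← aSum_re]; exact hval, ?_⟩
    intro j hj hj0
    rw [hj0, mem_Tset] at hj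
    exact not0_of_2 p hpO hp2 hj
  have master : ∀ (S T1 T2 : Finset (Fin (n+3))) (x y : ℝ),
      (∀ j ∈ S, j ≠ 0) → T1 ⊆ S → (∀ j ∈ T2, j ≠ 0) →
      (T2 \ S).card ≤ 1 → (T1 ∩ T2).card ≤ 1 →
      ((T2 \ S) = ∅ ∨ (T1 ∩ T2) = ∅) →
      (∑ j ∈ T1, (a j).re = x) → (∑ j ∈ T2, (a j).re = y) →
      x + y - 1 < ∑ j ∈ S, (a j).re := by
    intro S T1 T2 x y hS0 hT1S hT20 hcard1 hcard2 hdisjE hs1 hs2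
    apply keyIneq S T1 T2 _ x y hT1S (fun j hj => (hare j (hS0 j hj)).1) hs1 hs2
    apply sum_lt_one'
    · rcases hdisjE with h | h
      · rw [h, Finset.empty_union]; exact hcard2
      · rw [h, Finset.union_empty]; exact hcard1
    · intro j hj
      rcases Finset.mem_union.mp hj with h | h
      · exact (hare j (hT20 j (Finset.mem_sdiff.mp h).1)).2
      · exact (hare j (hT20 j (Finset.mem_inter.mp h).2)).2
    · intro j hj
      rcases Finset.mem_union.mp hj with h | h
      · exact (hare j (hT20 j (Finset.mem_sdiff.mp h).1)).1
      · exact (hare j (hT20 j (Finset.mem_inter.mp h).2)).1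
  set c : Fin (n+3) → ℤ :=
    fun j => if j = 0 then M1 + M2 else if j = 1 then -M1 else if j = 2 then -M2 else 0
    with hcdef
  have hc0 : c 0 = M1 + M2 := by simp [hcdef]
  have hc1 : c 1 = -M1 := by simp [hcdef, Ne.symm h01]
  have hc2 : c 2 = -M2 := by simp [hcdef, Ne.symm h02, Ne.symm h12]
  have hcle : ∀ j, j ≠ 0 → c j ≤ 0 := by
    intro j hj
    simp only [hcdef, if_neg hj]
    split_ifs <;> omega
  have hcsum : ∀ U : Finset (Fin (n+3)), ∑ j ∈ U, (c j : ℂ) =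
      (if (0 : Fin (n+3)) ∈ U then ((M1 : ℂ) + M2) else 0)
        - (if (1 : Fin (n+3)) ∈ U then (M1 : ℂ) else 0)
        - (if (2 : Fin (n+3)) ∈ U then (M2 : ℂ) else 0) := by
    intro U
    have hpt : ∀ j, (c j : ℂ) = (if j = 0 then ((M1 : ℂ) + M2) else 0)
        - (if j = 1 then (M1 : ℂ) else 0) - (if j = 2 then (M2 : ℂ) else 0) := by
      intro j
      by_cases hj0 : j = 0
      · rw [hj0, hc0]; push_cast; simp [h01, h02]
      · by_cases hj1 : j = 1
        · rw [hj1, hc1]; push_cast; simp [Ne.symm h01, h12]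
        · by_cases hj2 : j = 2
          · rw [hj2, hc2]; push_cast; simp [Ne.symm h02, Ne.symm h12]
          · simp [hcdef, hj0, hj1, hj2]
    rw [Finset.sum_congr rfl (fun j _ => hpt j), Finset.sum_sub_distrib, Finset.sum_sub_distrib,
      Finset.sum_ite_eq' U (0 : Fin (n+3)), Finset.sum_ite_eq' U (1 : Fin (n+3)),
      Finset.sum_ite_eq' U (2 : Fin (n+3))]
  set a' : Fin (n+3) → ℂ := fun j => a j + (c j : ℂ) with ha'def
  have haSum' : ∀ p : PP, aSum L a' p = aSum L a p +
      ((if memL p (L 0) then ((M1 : ℂ) + M2) else 0)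
        - (if memL p (L 1) then (M1 : ℂ) else 0)
        - (if memL p (L 2) then (M2 : ℂ) else 0)) := by
    intro p
    rw [aSum_eq L a' p, aSum_eq L a p]
    have h : ∑ j ∈ Tset L p, a' j = ∑ j ∈ Tset L p, a j + ∑ j ∈ Tset L p, ((c j : ℤ) : ℂ) := by
      rw [← Finset.sum_add_distrib]
    rw [h, hcsum (Tset L p)]
    simp only [mem_Tset]
  have hreOf : ∀ (p : PP) (z : ℤ), aSum L a p = (z : ℂ) →
      ∑ j ∈ Tset L p, (a j).re = (z : ℝ) := by
    intro p z h
    have h2 := congrArg Complex.re h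
    rw [aSum_re] at h2
    simpa using h2
  have hCsum0 : ∀ p : PP, memL p (L 0) → ∀ j ∈ Cset L p, j ≠ 0 := by
    intro p h0 j hj hj0
    rw [hj0, mem_Cset] at hj
    exact hj h0
  have htotre : ∀ p : PP, ∑ j ∈ Tset L p, (a j).re + ∑ j ∈ Cset L p, (a j).re = 0 := by
    intro p
    rw [Tset_Cset_sum]
    have h := congrArg Complex.re hasum
    rw [Complex.re_sum] at h
    simpa using h
  refine ⟨a', ?_, ?_, ?_, ?_⟩
  · intro j
    have h : 2 * (Real.pi : ℂ) * Complex.I * a' j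
        = 2 * (Real.pi : ℂ) * Complex.I * a j + (c j : ℂ) * (2 * (Real.pi : ℂ) * Complex.I) := by
      simp only [ha'def]; ring
    rw [h, Complex.exp_add, haexp j, Complex.exp_int_mul_two_pi_mul_I, mul_one]
  · have h : ∑ j, a' j = ∑ j, a j + ∑ j, (c j : ℂ) := by
      simp only [ha'def]; rw [← Finset.sum_add_distrib]
    rw [h, hasum, hcsum Finset.univ]
    simp
  · intro j hj
    obtain ⟨m, hm, heq⟩ := hj
    by_cases hj0 : j = 0
    · subst hj0
      have hA0 : a 0 = ((m - M1 - M2 : ℤ) : ℂ) := by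
        simp only [ha'def] at heq
        rw [hc0] at heq
        push_cast at heq ⊢
        linear_combination heq
      have htot : ∑ j ∈ Finset.univ.erase 0, a j = ((M1 + M2 - m : ℤ) : ℂ) := by
        have h1 : a 0 + ∑ j ∈ Finset.univ.erase 0, a j = 0 := by
          rw [Finset.add_sum_erase _ _ (Finset.mem_univ 0)]; exact hasum
        rw [hA0] at h1
        push_cast at h1 ⊢
        linear_combination h1
      have hSsum : ∑ j ∈ Finset.univ.erase 0, (a j).re = ((M1 + M2 - m : ℤ) : ℝ) := by
        have h2 := congrArg Complex.re htot
        rw [Complex.re_sum] at h2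
        simpa using h2
      have choose₁ : ∃ T1 : Finset (Fin (n+3)), (∀ j ∈ T1, j ≠ 0) ∧
          (∑ j ∈ T1, (a j).re = m₁) ∧ (T1 = ∅ ∨ ∃ p, p ∈ P₁ ∧ T1 = Tset L p) := by
        rcases hM1alt with h | ⟨p, hp⟩
        · exact ⟨∅, by simp, by simp [h], Or.inl rfl⟩
        · obtain ⟨hpO, hp1, hsum, h0⟩ := unpack₁ p hp
          exact ⟨Tset L p, h0, hsum, Or.inr ⟨p, hp, rfl⟩⟩
      have choose₂ : ∃ T2 : Finset (Fin (n+3)), (∀ j ∈ T2, j ≠ 0) ∧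
          (∑ j ∈ T2, (a j).re = m₂) ∧ (T2 = ∅ ∨ ∃ p, p ∈ P₂ ∧ T2 = Tset L p) := by
        rcases hM2alt with h | ⟨p, hp⟩
        · exact ⟨∅, by simp, by simp [h], Or.inl rfl⟩
        · obtain ⟨hpO, hp2, hsum, h0⟩ := unpack₂ p hp
          exact ⟨Tset L p, h0, hsum, Or.inr ⟨p, hp, rfl⟩⟩
      obtain ⟨T1, hT10, hT1sum, hT1alt⟩ := choose₁
      obtain ⟨T2, hT20, hT2sum, hT2alt⟩ := choose₂
      have hT1S : T1 ⊆ Finset.univ.erase 0 :=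
        fun j hj => Finset.mem_erase.mpr ⟨hT10 j hj, Finset.mem_univ j⟩
      have hT2S : T2 ⊆ Finset.univ.erase 0 :=
        fun j hj => Finset.mem_erase.mpr ⟨hT20 j hj, Finset.mem_univ j⟩
      have hT2d : T2 \ Finset.univ.erase 0 = ∅ := Finset.sdiff_eq_empty_iff_subset.mpr hT2S
      have hinter : (T1 ∩ T2).card ≤ 1 := by
        rcases hT1alt with rfl | ⟨p1, hp1, rfl⟩
        · simp
        · rcases hT2alt with rfl | ⟨p2, hp2, rfl⟩
          · simp
          · obtain ⟨hp1O, hp1L, _, _⟩ := unpack₁ p1 hp1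
            obtain ⟨hp2O, hp2L, _, _⟩ := unpack₂ p2 hp2
            apply ccard p1 p2 (ne12 p1 p2 hp1O hp1L hp2O hp2L)
            intro j hj
            rw [Finset.mem_inter, mem_Tset, mem_Tset] at hj
            exact hj
      have hmain := master (Finset.univ.erase 0) T1 T2 m₁ m₂
        (fun j hj => (Finset.mem_erase.mp hj).1) hT1S hT20 (by rw [hT2d]; simp) hinter
        (Or.inl hT2d) hT1sum hT2sum
      rw [hSsum, ← hM1re, ← hM2re] at hmain
      have hcon : (m : ℝ) < 1 := by push_cast at hmain; linarith
      have hcon' : m < 1 := by exact_mod_cast hcon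
      omega
    · have hAj : a j = ((m - c j : ℤ) : ℂ) := by
        simp only [ha'def] at heq
        push_cast at heq ⊢
        linear_combination heq
      have h1 := (hare j hj0).2
      rw [hAj] at h1
      have h1' : ((m - c j : ℤ) : ℝ) < 1 := by simpa using h1
      have h2 : (m - c j : ℤ) < 1 := by exact_mod_cast h1'
      have h3 := hcle j hj0
      omega
  · intro p hp hin
    obtain ⟨m, hm, heq⟩ := hin
    by_cases hpO : p = O
    · have hp0 : memL p (L 0) := by rw [hpO]; exact hO0
      have hp1 : memL p (L 1) := by rw [hpO]; exact hO1
      have hp2 : memL p (L 2) := by rw [hpO]; exact hO2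
      have hsh := haSum' p
      rw [if_pos hp0, if_pos hp1, if_pos hp2] at hsh
      rw [hsh] at heq
      have hval : aSum L a p = ((m : ℤ) : ℂ) := by
        push_cast at heq ⊢
        linear_combination heq
      have hre := hreOf p m hval
      have htot := htotre p
      have hnn : 0 ≤ ∑ j ∈ Cset L p, (a j).re :=
        Finset.sum_nonneg fun j hj => (hare j (hCsum0 p hp0 j hj)).1
      have hle : (m : ℝ) ≤ 0 := by linarith
      have hle' : m ≤ 0 := by exact_mod_cast hle
      omega
    · rcases hcov p hp with h0 | h1 | h2
      · -- p ≠ O on L 0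
        have hn1 : ¬ memL p (L 1) := not1_of_0 p hpO h0
        have hn2 : ¬ memL p (L 2) := not2_of_0 p hpO h0
        have hsh := haSum' p
        rw [if_pos h0, if_neg hn1, if_neg hn2] at hsh
        rw [hsh] at heq
        have hval : aSum L a p = ((m - M1 - M2 : ℤ) : ℂ) := by
          push_cast at heq ⊢
          linear_combination heq
        have hre := hreOf p _ hval
        have htot := htotre p
        have hSsum : ∑ j ∈ Cset L p, (a j).re = ((M1 + M2 - m : ℤ) : ℝ) := by
          push_cast at hre ⊢
          linarith
        have hSq0 : ∀ j ∈ Cset L p, j ≠ 0 := hCsum0 p h0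
        have hsubY : ∀ x : PP, (x ∉ {x : PP | ∃ k, memL p (L k) ∧ memL x (L k)}) →
            Tset L x ⊆ Cset L p := by
          intro x hx j hj
          rw [mem_Cset]
          exact fun hq => hx ⟨j, hq, (mem_Tset L x j).mp hj⟩
        have hTdiff : ∀ y : PP, y ≠ p → (Tset L y \ Cset L p).card ≤ 1 := by
          intro y hyp
          apply ccard y p hyp
          intro j hj
          rw [Finset.mem_sdiff, mem_Tset, mem_Cset] at hj
          exact ⟨hj.1, not_not.mp hj.2⟩
        have hmain : m₁ + m₂ - 1 < ∑ j ∈ Cset L p, (a j).re := by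
          rcases hcond with hc1 | hc2 | hc3
          · have hm10 : m₁ = 0 := by
              rcases hM1alt with h | ⟨p1, hp1⟩
              · exact h
              · rw [hc1] at hp1; exact absurd hp1 (Set.notMem_empty p1)
            rcases hM2alt with h | ⟨p2, hp2⟩
            · exact master _ ∅ ∅ m₁ m₂ hSq0 (by simp) (by simp) (by simp) (by simp)
                (Or.inl (by simp)) (by simp [hm10]) (by simp [h])
            · obtain ⟨hp2O, hp2L, hp2sum, hp20⟩ := unpack₂ p2 hp2
              have hp2ne : p2 ≠ p := fun hh => (not0_of_2 p2 hp2O hp2L) (by rw [hh]; exact h0)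
              exact master _ ∅ (Tset L p2) m₁ m₂ hSq0 (by simp) hp20 (hTdiff p2 hp2ne)
                (by simp) (Or.inr (by simp)) (by simp [hm10]) hp2sum
          · have hm20 : m₂ = 0 := by
              rcases hM2alt with h | ⟨p2, hp2⟩
              · exact h
              · rw [hc2] at hp2; exact absurd hp2 (Set.notMem_empty p2)
            rcases hM1alt with h | ⟨p1, hp1⟩
            · have hmm := master _ ∅ ∅ m₂ m₁ hSq0 (by simp) (by simp) (by simp) (by simp)
                (Or.inl (by simp)) (by simp [hm20]) (by simp [h])
              linarith
            · obtain ⟨hp1O, hp1L, hp1sum, hp10⟩ := unpack₁ p1 hp1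
              have hp1ne : p1 ≠ p := fun hh => (not0_of_1 p1 hp1O hp1L) (by rw [hh]; exact h0)
              have hmm := master _ ∅ (Tset L p1) m₂ m₁ hSq0 (by simp) hp10 (hTdiff p1 hp1ne)
                (by simp) (Or.inr (by simp)) (by simp [hm20]) hp1sum
              linarith
          · rcases hc3 p hpO hp h0 with ⟨⟨x1, hx1⟩, ⟨x2, hx2⟩⟩ | ⟨x, hx, y, hy, hline⟩ |
              ⟨x, hx, y, hy, hline⟩
            · obtain ⟨hx1O, hx1L, hx1sum, hx10⟩ := unpack₁ x1 hx1.1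
              obtain ⟨hx2O, hx2L, hx2sum, hx20⟩ := unpack₂ x2 hx2.1
              have hd : Tset L x2 \ Cset L p = ∅ :=
                Finset.sdiff_eq_empty_iff_subset.mpr (hsubY x2 hx2.2)
              have hint : (Tset L x1 ∩ Tset L x2).card ≤ 1 := by
                apply ccard x1 x2 (ne12 x1 x2 hx1O hx1L hx2O hx2L)
                intro j hj
                rw [Finset.mem_inter, mem_Tset, mem_Tset] at hj
                exact hj
              exact master _ (Tset L x1) (Tset L x2) m₁ m₂ hSq0 (hsubY x1 hx1.2) hx20
                (by rw [hd]; simp) hint (Or.inl hd) hx1sum hx2sum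
            · obtain ⟨hxO, hxL, hxsum, hx0⟩ := unpack₁ x hx.1
              obtain ⟨hyO, hyL, hysum, hy0⟩ := unpack₂ y hy
              have hyne : y ≠ p := fun hh => (not0_of_2 y hyO hyL) (by rw [hh]; exact h0)
              have hint : Tset L x ∩ Tset L y = ∅ := by
                apply Finset.eq_empty_iff_forall_notMem.mpr
                intro j hj
                rw [Finset.mem_inter, mem_Tset, mem_Tset] at hj
                exact hline j hj
              exact master _ (Tset L x) (Tset L y) m₁ m₂ hSq0 (hsubY x hx.2) hy0
                (hTdiff y hyne) (by rw [hint]; simp) (Or.inr hint) hxsum hysum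
            · obtain ⟨hxO, hxL, hxsum, hx0⟩ := unpack₂ x hx.1
              obtain ⟨hyO, hyL, hysum, hy0⟩ := unpack₁ y hy
              have hyne : y ≠ p := fun hh => (not0_of_1 y hyO hyL) (by rw [hh]; exact h0)
              have hint : Tset L x ∩ Tset L y = ∅ := by
                apply Finset.eq_empty_iff_forall_notMem.mpr
                intro j hj
                rw [Finset.mem_inter, mem_Tset, mem_Tset] at hj
                exact hline j hj
              have hmm := master _ (Tset L x) (Tset L y) m₂ m₁ hSq0 (hsubY x hx.2) hy0
                (hTdiff y hyne) (by rw [hint]; simp) (Or.inr hint) hxsum hysum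
              linarith
        rw [hSsum, ← hM1re, ← hM2re] at hmain
        have hcon : (m : ℝ) < 1 := by push_cast at hmain; linarith
        have hcon' : m < 1 := by exact_mod_cast hcon
        omega
      · -- p ≠ O on L 1
        have hn0 : ¬ memL p (L 0) := not0_of_1 p hpO h1
        have hn2 : ¬ memL p (L 2) := not2_of_1 p hpO h1
        have hsh := haSum' p
        rw [if_neg hn0, if_pos h1, if_neg hn2] at hsh
        rw [hsh] at heq
        have hval : aSum L a p = ((m + M1 : ℤ) : ℂ) := by
          push_cast at heq ⊢
          linear_combination heq
        have hrev : (aSum L a p).re = ((m + M1 : ℤ) : ℝ) := by rw [hval]; simp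
        have hposR : (aSum L a p).re ∈ PosIntR := ⟨m + M1, by omega, hrev⟩
        have hle := hm₁.2 (Set.mem_insert_of_mem _ ⟨p, ⟨hpO, hp, h1, hposR⟩, rfl⟩)
        simp only at hle
        rw [hrev, ← hM1re] at hle
        have hle2 : (m : ℝ) ≤ 0 := by push_cast at hle; linarith
        have hle3 : m ≤ 0 := by exact_mod_cast hle2
        omega
      · -- p ≠ O on L 2
        have hn0 : ¬ memL p (L 0) := not0_of_2 p hpO h2
        have hn1 : ¬ memL p (L 1) := not1_of_2 p hpO h2
        have hsh := haSum' p
        rw [if_neg hn0, if_neg hn1, if_pos h2] at hsh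
        rw [hsh] at heq
        have hval : aSum L a p = ((m + M2 : ℤ) : ℂ) := by
          push_cast at heq ⊢
          linear_combination heq
        have hrev : (aSum L a p).re = ((m + M2 : ℤ) : ℝ) := by rw [hval]; simp
        have hposR : (aSum L a p).re ∈ PosIntR := ⟨m + M2, by omega, hrev⟩
        have hle := hm₂.2 (Set.mem_insert_of_mem _ ⟨p, ⟨hpO, hp, h2, hposR⟩, rfl⟩)
        simp only at hle
        rw [hrev, ← hM2re] at hle
        have hle2 : (m : ℝ) ≤ 0 := by push_cast at hle; linarith
        have hle3 : m ≤ 0 := by exact_mod_cast hle2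
        omega
end
end
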